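/- Define P₀(s) for s > 0 by P₀(s) = ∫₀¹ p₀(s,λ) dλ where, with a = 3/(π²s) and y = λ^{1/2}, p₀(s,λ) = 1 if y ≤ a, p₀(s,λ) = 1 − 1/y + a/y² if a < y ≤ a(1−y)^{-1}, and p₀(s,λ) = 0 otherwise. Then P₀(s) = 1 if a ≥ 1; P₀(s) = −1 + 2a − 2a·log a if 1/4 ≤ a ≤ 1; and P₀(s) = −1 + 2a + 2√(1/4 − a) − 4a·log(1/2 + √(1/4 − a)) if 0 < a ≤ 1/4. -/

import Mathlib

open MeasureTheory


lemma hasDerivAt_G (a : ℝ) {x : ℝ} (hx : 0 < x) :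
    HasDerivAt (fun x => x - 2 * Real.sqrt x + a * Real.log x)
      (1 - 1 / Real.sqrt x + a / x) x := by
  have hs : Real.sqrt x ≠ 0 := by positivity
  have h1 := (Real.hasDerivAt_sqrt hx.ne').const_mul 2
  have h2 := (Real.hasDerivAt_log hx.ne').const_mul a
  have := ((hasDerivAt_id x).sub h1).add h2
  refine HasDerivAt.congr_deriv this ?_
  field_simp

lemma contOn_mid (a p q : ℝ) (hp : 0 < p) :
    ContinuousOn (fun x => 1 - 1 / Real.sqrt x + a / x) (Set.Icc p q) := by
  apply ContinuousOn.add
  · apply continuousOn_const.sub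
    apply ContinuousOn.div continuousOn_const Real.continuous_sqrt.continuousOn
    intro x hx
    have : 0 < x := lt_of_lt_of_le hp hx.1
    positivity
  · exact continuousOn_const.div continuousOn_id fun x hx => (lt_of_lt_of_le hp hx.1).ne'

lemma integrableOn_mid (a p q : ℝ) (hp : 0 < p) :
    IntegrableOn (fun x => 1 - 1 / Real.sqrt x + a / x) (Set.Ioc p q) := by
  exact ((contOn_mid a p q hp).integrableOn_Icc).mono_set Set.Ioc_subset_Icc_self

lemma integral_mid (a p q : ℝ) (hp : 0 < p) (hpq : p ≤ q) :
    ∫ x in Set.Ioc p q, (1 - 1 / Real.sqrt x + a / x) =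
      (q - 2 * Real.sqrt q + a * Real.log q) - (p - 2 * Real.sqrt p + a * Real.log p) := by
  rw [← intervalIntegral.integral_of_le hpq]
  apply intervalIntegral.integral_eq_sub_of_hasDerivAt
  · intro x hx
    rw [Set.uIcc_of_le hpq] at hx
    exact hasDerivAt_G a (lt_of_lt_of_le hp hx.1)
  · rw [intervalIntegrable_iff_integrableOn_Ioc_of_le hpq]
    exact integrableOn_mid a p q hp

set_option maxHeartbeats 2000000 in
lemma hall_aux (a : ℝ) (ha : 0 < a) (f : ℝ → ℝ)
    (hf : ∀ lam, f lam = if Real.sqrt lam ≤ a then 1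
      else if Real.sqrt lam * (1 - Real.sqrt lam) ≤ a then
        1 - 1 / Real.sqrt lam + a / Real.sqrt lam ^ 2 else 0) :
    ∫ lam in Set.Ioc (0:ℝ) 1, f lam =
      if 1 ≤ a then 1
      else if 1/4 ≤ a then -1 + 2*a - 2*a*Real.log a
      else -1 + 2*a + 2*Real.sqrt (1/4 - a) - 4*a*Real.log (1/2 + Real.sqrt (1/4 - a)) := by
  by_cases h1 : 1 ≤ a
  · rw [if_pos h1]
    have hEq : Set.EqOn f (fun _ => (1:ℝ)) (Set.Ioc 0 1) := by
      intro lam hlam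
      rw [hf, if_pos]
      have h2 : Real.sqrt lam ≤ 1 := by
        rw [show (1:ℝ) = Real.sqrt 1 by simp]
        exact Real.sqrt_le_sqrt hlam.2
      linarith
    rw [setIntegral_congr_fun measurableSet_Ioc hEq]
    simp [Real.volume_Ioc]
  push_neg at h1
  rw [if_neg (not_le.2 h1)]
  have ha2 : (0:ℝ) < a^2 := by positivity
  -- first piece: f = 1 on Ioc 0 a²
  have hEq1 : Set.EqOn f (fun _ => (1:ℝ)) (Set.Ioc 0 (a^2)) := by
    intro lam hlam
    rw [hf, if_pos]
    calc Real.sqrt lam ≤ Real.sqrt (a^2) := Real.sqrt_le_sqrt hlam.2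
    _ = a := Real.sqrt_sq ha.le
  have hInt1 : IntegrableOn f (Set.Ioc 0 (a^2)) :=
    (integrableOn_const measure_Ioc_lt_top.ne).congr_fun hEq1.symm measurableSet_Ioc
  have hI1 : ∫ x in Set.Ioc 0 (a^2), f x = a^2 := by
    rw [setIntegral_congr_fun measurableSet_Ioc hEq1]
    simp [Real.volume_Ioc, ENNReal.toReal_ofReal ha2.le, ha2.le]
  by_cases h14 : 1/4 ≤ a
  · rw [if_pos h14]
    have key : a^2 ≤ 1 := by nlinarith
    have hEq2 : Set.EqOn f (fun x => 1 - 1 / Real.sqrt x + a / x) (Set.Ioc (a^2) 1) := by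
      intro lam hlam
      have hl0 : 0 < lam := lt_trans ha2 hlam.1
      have hy : a < Real.sqrt lam := by
        have := Real.sqrt_lt_sqrt (sq_nonneg a) hlam.1
        rwa [Real.sqrt_sq ha.le] at this
      have hcond : Real.sqrt lam * (1 - Real.sqrt lam) ≤ a := by
        nlinarith [sq_nonneg (Real.sqrt lam - 1/2)]
      rw [hf, if_neg (not_le.2 hy), if_pos hcond, Real.sq_sqrt hl0.le]
    have hInt2 : IntegrableOn f (Set.Ioc (a^2) 1) :=
      (integrableOn_mid a (a^2) 1 ha2).congr_fun hEq2.symm measurableSet_Ioc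
    rw [← Set.Ioc_union_Ioc_eq_Ioc ha2.le key,
      setIntegral_union (Set.Ioc_disjoint_Ioc_of_le le_rfl) measurableSet_Ioc hInt1 hInt2,
      hI1, setIntegral_congr_fun measurableSet_Ioc hEq2, integral_mid a (a^2) 1 ha2 key,
      Real.sqrt_one, Real.log_one, Real.sqrt_sq ha.le,
      show Real.log (a^2) = 2 * Real.log a by rw [Real.log_pow]; push_cast; ring]
    ring
  · rw [if_neg (not_le.2 (lt_of_not_ge h14))]
    push_neg at h14

    have ha2 : (0:ℝ) < a^2 := by positivity
    set d := Real.sqrt (1 - 4*a) with hddef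
    have hd2 : d^2 = 1 - 4*a := Real.sq_sqrt (by linarith)
    have hd0 : 0 < d := Real.sqrt_pos.2 (by linarith)
    have hd1 : d < 1 := by nlinarith
    have hy1 : 0 < (1-d)/2 := by linarith
    have hy2 : 0 < (1+d)/2 := by linarith
    have hay1 : a < (1-d)/2 := by nlinarith
    have hsq14 : Real.sqrt (1/4 - a) = d/2 := by
      rw [show (1/4 - a : ℝ) = (d/2)^2 by nlinarith, Real.sqrt_sq (by positivity)]
    -- orderings of squares
    have o1 : a^2 < ((1-d)/2)^2 := by nlinarith
    have o2 : ((1-d)/2)^2 < ((1+d)/2)^2 := by nlinarith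
    have o3 : ((1+d)/2)^2 < 1 := by nlinarith
    -- EqOn on the three remaining pieces
    have hEqA : Set.EqOn f (fun x => 1 - 1 / Real.sqrt x + a / x)
        (Set.Ioc (a^2) (((1-d)/2)^2)) := by
      intro lam hlam
      have hl0 : 0 < lam := lt_trans ha2 hlam.1
      have hy : a < Real.sqrt lam := by
        have := Real.sqrt_lt_sqrt (sq_nonneg a) hlam.1
        rwa [Real.sqrt_sq ha.le] at this
      have hyle : Real.sqrt lam ≤ (1-d)/2 := by
        have := Real.sqrt_le_sqrt hlam.2
        rwa [Real.sqrt_sq hy1.le] at this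
      have hcond : Real.sqrt lam * (1 - Real.sqrt lam) ≤ a := by
        have h := mul_nonneg (by linarith : (0:ℝ) ≤ (1-d)/2 - Real.sqrt lam)
          (by linarith : (0:ℝ) ≤ (1+d)/2 - Real.sqrt lam)
        nlinarith
      rw [hf, if_neg (not_le.2 hy), if_pos hcond, Real.sq_sqrt hl0.le]
    have hEqB : Set.EqOn f (fun _ => (0:ℝ)) (Set.Ioo (((1-d)/2)^2) (((1+d)/2)^2)) := by
      intro lam hlam
      have hygt : (1-d)/2 < Real.sqrt lam := by
        have := Real.sqrt_lt_sqrt (sq_nonneg _) hlam.1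
        rwa [Real.sqrt_sq hy1.le] at this
      have hylt : Real.sqrt lam < (1+d)/2 := by
        have hl0 : 0 < lam := lt_trans (by positivity) hlam.1
        have := Real.sqrt_lt_sqrt hl0.le hlam.2
        rwa [Real.sqrt_sq hy2.le] at this
      rw [hf, if_neg (by push_neg; linarith), if_neg]
      push_neg
      have h := mul_pos (by linarith : (0:ℝ) < Real.sqrt lam - (1-d)/2)
        (by linarith : (0:ℝ) < (1+d)/2 - Real.sqrt lam)
      nlinarith
    have hEqC : Set.EqOn f (fun x => 1 - 1 / Real.sqrt x + a / x)
        (Set.Ioc (((1+d)/2)^2) 1) := by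
      intro lam hlam
      have hl0 : 0 < lam := lt_trans (by positivity) hlam.1
      have hygt : (1+d)/2 < Real.sqrt lam := by
        have := Real.sqrt_lt_sqrt (sq_nonneg _) hlam.1
        rwa [Real.sqrt_sq hy2.le] at this
      have hcond : Real.sqrt lam * (1 - Real.sqrt lam) ≤ a := by
        have h := mul_nonneg (by linarith : (0:ℝ) ≤ Real.sqrt lam - (1-d)/2)
          (by linarith : (0:ℝ) ≤ Real.sqrt lam - (1+d)/2)
        nlinarith
      rw [hf, if_neg (by push_neg; linarith), if_pos hcond, Real.sq_sqrt hl0.le]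
    -- integrability
    have hIntA : IntegrableOn f (Set.Ioc (a^2) (((1-d)/2)^2)) :=
      (integrableOn_mid a _ _ ha2).congr_fun hEqA.symm measurableSet_Ioc
    have hIntB : IntegrableOn f (Set.Ioc (((1-d)/2)^2) (((1+d)/2)^2)) := by
      rw [integrableOn_Ioc_iff_integrableOn_Ioo]
      exact (integrableOn_const measure_Ioo_lt_top.ne).congr_fun hEqB.symm measurableSet_Ioo
    have hIntC : IntegrableOn f (Set.Ioc (((1+d)/2)^2) 1) :=
      (integrableOn_mid a _ _ (by positivity)).congr_fun hEqC.symm measurableSet_Ioc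
    -- piece values
    have hIB : ∫ x in Set.Ioc (((1-d)/2)^2) (((1+d)/2)^2), f x = 0 := by
      rw [integral_Ioc_eq_integral_Ioo, setIntegral_congr_fun measurableSet_Ioo hEqB]
      simp
    -- split
    rw [← Set.Ioc_union_Ioc_eq_Ioc (le_of_lt (lt_trans (lt_trans ha2 o1) o2)) o3.le,
      ← Set.Ioc_union_Ioc_eq_Ioc (le_of_lt (lt_trans ha2 o1)) o2.le,
      ← Set.Ioc_union_Ioc_eq_Ioc ha2.le o1.le,
      setIntegral_union (by
        rw [Set.Ioc_union_Ioc_eq_Ioc ha2.le o1.le,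
          Set.Ioc_union_Ioc_eq_Ioc (le_of_lt (lt_trans ha2 o1)) o2.le]
        exact (Set.Ioc_disjoint_Ioc_of_le le_rfl)) measurableSet_Ioc
        (((hInt1.union hIntA).union hIntB)) hIntC,
      setIntegral_union (by
        rw [Set.Ioc_union_Ioc_eq_Ioc ha2.le o1.le]
        exact (Set.Ioc_disjoint_Ioc_of_le le_rfl)) measurableSet_Ioc (hInt1.union hIntA) hIntB,
      setIntegral_union (Set.Ioc_disjoint_Ioc_of_le le_rfl) measurableSet_Ioc hInt1 hIntA,
      hI1, hIB, setIntegral_congr_fun measurableSet_Ioc hEqA,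
      setIntegral_congr_fun measurableSet_Ioc hEqC,
      integral_mid a _ _ ha2 o1.le, integral_mid a _ _ (by positivity) o3.le]
    -- now pure arithmetic with sqrt and log
    rw [Real.sqrt_one, Real.log_one, Real.sqrt_sq ha.le, Real.sqrt_sq hy1.le,
      Real.sqrt_sq hy2.le, hsq14,
      show Real.log (a^2) = 2 * Real.log a by rw [Real.log_pow]; push_cast; ring,
      show Real.log (((1-d)/2)^2) = 2 * Real.log ((1-d)/2) by rw [Real.log_pow]; push_cast; ring,
      show Real.log (((1+d)/2)^2) = 2 * Real.log ((1+d)/2) by rw [Real.log_pow]; push_cast; ring]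
    have hlog : Real.log ((1-d)/2) + Real.log ((1+d)/2) = Real.log a := by
      rw [← Real.log_mul hy1.ne' hy2.ne']
      congr 1
      nlinarith
    have h12 : (1:ℝ)/2 + d/2 = (1+d)/2 := by ring
    rw [h12]
    linear_combination (2*a) * hlog

/-- p₀(s,λ): with a = 3/(π²s) and y = λ^{1/2}, equal to 1 if y ≤ a; 1 − 1/y + a/y² if
a < y ≤ a(1−y)^{-1} (i.e. y(1−y) ≤ a); and 0 otherwise. -/
noncomputable def pZero (s lam : ℝ) : ℝ :=
  let a := 3 / (Real.pi ^ 2 * s); let y := Real.sqrt lam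
  if y ≤ a then 1 else if y * (1 - y) ≤ a then 1 - 1 / y + a / y ^ 2 else 0

/-- Hall's gap distribution P₀(s) = ∫₀¹ p₀(s,λ) dλ. -/
theorem hall_distribution (s : ℝ) (hs : 0 < s) :
    ∫ lam in Set.Ioc (0 : ℝ) 1, pZero s lam =
      (let a := 3 / (Real.pi ^ 2 * s)
        if 1 ≤ a then 1
        else if 1 / 4 ≤ a then -1 + 2 * a - 2 * a * Real.log a
        else -1 + 2 * a + 2 * Real.sqrt (1 / 4 - a)
          - 4 * a * Real.log (1 / 2 + Real.sqrt (1 / 4 - a))) := by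
  have hpi := Real.pi_pos
  have ha : 0 < 3 / (Real.pi ^ 2 * s) := by positivity
  exact hall_aux _ ha (pZero s) (fun lam => rfl)
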